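/- Let Σ be a positive definite n×n real matrix, Q a positive definite m×m real matrix, F an m×n real matrix, and μ ∈ ℝⁿ. Set Σ* := (Σ⁻¹ + FᵀQ⁻¹F)⁻¹ and, for z ∈ ℝᵐ, μ*(z) := Σ*(Σ⁻¹μ + FᵀQ⁻¹z). Then for all x ∈ ℝⁿ and z ∈ ℝᵐ, N(z; Fx, Q) · N(x; μ, Σ) = N(z; Fμ, Q + FΣFᵀ) · N(x; μ*(z), Σ*). -/

import Mathlib

open Matrix

/-- The multivariate Gaussian density `N(x; ν, C)` on `ℝ^d` with mean `ν` and
(positive definite) covariance matrix `C`. -/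
noncomputable def gauss (d : ℕ) (C : Matrix (Fin d) (Fin d) ℝ) (ν x : Fin d → ℝ) : ℝ :=
  (2 * Real.pi) ^ (-(d : ℝ) / 2) * C.det ^ (-(1 : ℝ) / 2) *
    Real.exp (-((x - ν) ⬝ᵥ (C⁻¹ *ᵥ (x - ν))) / 2)

private lemma dp_swap {k l : ℕ} (A : Matrix (Fin k) (Fin l) ℝ) (v : Fin k → ℝ)
    (w : Fin l → ℝ) : v ⬝ᵥ (A *ᵥ w) = (Aᵀ *ᵥ v) ⬝ᵥ w := by
  rw [Matrix.dotProduct_mulVec, Matrix.mulVec_transpose]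

/-- Gaussian product factorization underlying backward sampling for the Kalman filter:
`N(z; Fx, Q) · N(x; μ, Σ) = N(z; Fμ, Q + FΣFᵀ) · N(x; μ*(z), Σ*)` where
`Σ* = (Σ⁻¹ + FᵀQ⁻¹F)⁻¹` and `μ*(z) = Σ*(Σ⁻¹μ + FᵀQ⁻¹z)`. -/
theorem gaussian_product_factorization
    {n m : ℕ} (Sig : Matrix (Fin n) (Fin n) ℝ) (Q : Matrix (Fin m) (Fin m) ℝ)
    (F : Matrix (Fin m) (Fin n) ℝ) (μ : Fin n → ℝ)
    (hSig : Sig.PosDef) (hQ : Q.PosDef) :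
    ∀ (x : Fin n → ℝ) (z : Fin m → ℝ),
      gauss m Q (F *ᵥ x) z * gauss n Sig μ x =
        gauss m (Q + F * Sig * Fᵀ) (F *ᵥ μ) z *
          gauss n ((Sig⁻¹ + Fᵀ * Q⁻¹ * F)⁻¹)
            ((Sig⁻¹ + Fᵀ * Q⁻¹ * F)⁻¹ *ᵥ (Sig⁻¹ *ᵥ μ + Fᵀ *ᵥ (Q⁻¹ *ᵥ z))) x := by
  intro x z
  have hQi : Q⁻¹.PosDef := hQ.inv
  have hSi : Sig⁻¹.PosDef := hSig.inv
  obtain ⟨M, hMdef⟩ : ∃ M, Sig⁻¹ + Fᵀ * Q⁻¹ * F = M := ⟨_, rfl⟩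
  obtain ⟨S, hSdef⟩ : ∃ S, Q + F * Sig * Fᵀ = S := ⟨_, rfl⟩
  have hFQF : (Fᵀ * Q⁻¹ * F).PosSemidef := by
    have := hQi.posSemidef.conjTranspose_mul_mul_same F
    rwa [Matrix.conjTranspose_eq_transpose_of_trivial] at this
  have hFSF : (F * Sig * Fᵀ).PosSemidef := by
    have := hSig.posSemidef.mul_mul_conjTranspose_same F
    rwa [Matrix.conjTranspose_eq_transpose_of_trivial] at this
  have hM : M.PosDef := hMdef ▸ hSi.add_posSemidef hFQF
  have hS : S.PosDef := hSdef ▸ hQ.add_posSemidef hFSF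
  -- invertibility facts
  have hQQ : Q * Q⁻¹ = 1 := Matrix.mul_nonsing_inv Q hQ.det_pos.ne'.isUnit
  have hSS : Sig * Sig⁻¹ = 1 := Matrix.mul_nonsing_inv Sig hSig.det_pos.ne'.isUnit
  have hSS' : Sig⁻¹ * Sig = 1 := Matrix.nonsing_inv_mul Sig hSig.det_pos.ne'.isUnit
  have hMM : M * M⁻¹ = 1 := Matrix.mul_nonsing_inv M hM.det_pos.ne'.isUnit
  have hMM' : M⁻¹ * M = 1 := Matrix.nonsing_inv_mul M hM.det_pos.ne'.isUnit
  -- symmetry facts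
  have hQisymm : (Q⁻¹)ᵀ = Q⁻¹ := by
    rw [Matrix.transpose_nonsing_inv]
    congr 1
    have := hQ.isHermitian
    rwa [Matrix.IsHermitian, Matrix.conjTranspose_eq_transpose_of_trivial] at this
  have hMsymm : Mᵀ = M := by
    have := hM.isHermitian
    rwa [Matrix.IsHermitian, Matrix.conjTranspose_eq_transpose_of_trivial] at this
  have hFQF' : Fᵀ * Q⁻¹ * F = M - Sig⁻¹ := by rw [← hMdef]; abel
  -- Woodbury identity
  have hWood : S⁻¹ = Q⁻¹ - Q⁻¹ * F * M⁻¹ * (Fᵀ * Q⁻¹) := by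
    apply Matrix.inv_eq_right_inv
    have c1 : Q * (Q⁻¹ * F * M⁻¹ * (Fᵀ * Q⁻¹)) = F * M⁻¹ * (Fᵀ * Q⁻¹) := by
      calc Q * (Q⁻¹ * F * M⁻¹ * (Fᵀ * Q⁻¹))
          = (Q * Q⁻¹) * (F * M⁻¹ * (Fᵀ * Q⁻¹)) := by simp only [Matrix.mul_assoc]
        _ = _ := by rw [hQQ, Matrix.one_mul]
    have c2 : F * Sig * Fᵀ * (Q⁻¹ * F * M⁻¹ * (Fᵀ * Q⁻¹))
        = F * Sig * (Fᵀ * Q⁻¹) - F * M⁻¹ * (Fᵀ * Q⁻¹) := by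
      calc F * Sig * Fᵀ * (Q⁻¹ * F * M⁻¹ * (Fᵀ * Q⁻¹))
          = F * Sig * (Fᵀ * Q⁻¹ * F * M⁻¹) * (Fᵀ * Q⁻¹) := by
            simp only [Matrix.mul_assoc]
        _ = F * Sig * ((M - Sig⁻¹) * M⁻¹) * (Fᵀ * Q⁻¹) := by
            rw [show Fᵀ * Q⁻¹ * F * M⁻¹ = (M - Sig⁻¹) * M⁻¹ by rw [hFQF']]
        _ = F * Sig * (1 - Sig⁻¹ * M⁻¹) * (Fᵀ * Q⁻¹) := by rw [Matrix.sub_mul, hMM]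
        _ = F * Sig * (Fᵀ * Q⁻¹) - F * (Sig * (Sig⁻¹ * M⁻¹)) * (Fᵀ * Q⁻¹) := by
            simp only [Matrix.mul_sub, Matrix.sub_mul, Matrix.mul_one, Matrix.mul_assoc]
        _ = F * Sig * (Fᵀ * Q⁻¹) - F * M⁻¹ * (Fᵀ * Q⁻¹) := by
            rw [← Matrix.mul_assoc Sig, hSS, Matrix.one_mul]
    rw [← hSdef, Matrix.add_mul, Matrix.mul_sub, Matrix.mul_sub, hQQ, c1, c2,
      show F * Sig * Fᵀ * Q⁻¹ = F * Sig * (Fᵀ * Q⁻¹) by simp only [Matrix.mul_assoc]]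
    abel
  -- determinant identity
  have hdetM : M.det = S.det * (Sig.det)⁻¹ * (Q.det)⁻¹ := by
    have h1 : M = Sig⁻¹ * (1 + Sig * Fᵀ * Q⁻¹ * F) := by
      rw [Matrix.mul_add, Matrix.mul_one, ← hMdef]
      congr 1
      calc Fᵀ * Q⁻¹ * F = (Sig⁻¹ * Sig) * (Fᵀ * (Q⁻¹ * F)) := by
            rw [hSS', Matrix.one_mul, Matrix.mul_assoc]
        _ = Sig⁻¹ * (Sig * Fᵀ * Q⁻¹ * F) := by simp only [Matrix.mul_assoc]
    have h2 : (1 + (Sig * Fᵀ * Q⁻¹) * F).det = (1 + F * (Sig * Fᵀ * Q⁻¹)).det :=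
      Matrix.det_one_add_mul_comm _ _
    have h3 : 1 + F * (Sig * Fᵀ * Q⁻¹) = S * Q⁻¹ := by
      rw [← hSdef, Matrix.add_mul, hQQ]
      congr 1
      simp only [Matrix.mul_assoc]
    have hdetSi : (Sig⁻¹).det = (Sig.det)⁻¹ := by
      rw [Matrix.det_nonsing_inv, Ring.inverse_eq_inv]
    have hdetQi : (Q⁻¹).det = (Q.det)⁻¹ := by
      rw [Matrix.det_nonsing_inv, Ring.inverse_eq_inv]
    calc M.det = (Sig⁻¹).det * (1 + (Sig * Fᵀ * Q⁻¹) * F).det := by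
          rw [h1, Matrix.det_mul]
      _ = (Sig.det)⁻¹ * ((S * Q⁻¹).det) := by rw [h2, h3, hdetSi]
      _ = S.det * (Sig.det)⁻¹ * (Q.det)⁻¹ := by
          rw [Matrix.det_mul, hdetQi]; ring
  have hdetMinv : (M⁻¹).det = (M.det)⁻¹ := by
    rw [Matrix.det_nonsing_inv, Ring.inverse_eq_inv]
  have hdetprod : S.det * (M⁻¹).det = Q.det * Sig.det := by
    have hs0 : S.det ≠ 0 := hS.det_pos.ne'
    have hq0 : Q.det ≠ 0 := hQ.det_pos.ne'
    have hg0 : Sig.det ≠ 0 := hSig.det_pos.ne'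
    rw [hdetMinv, hdetM]
    field_simp
  have hdets : Q.det ^ (-(1:ℝ)/2) * Sig.det ^ (-(1:ℝ)/2)
      = S.det ^ (-(1:ℝ)/2) * (M⁻¹).det ^ (-(1:ℝ)/2) := by
    rw [← Real.mul_rpow hQ.det_pos.le hSig.det_pos.le,
      ← Real.mul_rpow hS.det_pos.le
        (by rw [hdetMinv]; exact (inv_pos.mpr hM.det_pos).le), hdetprod]
  -- quadratic form identity
  obtain ⟨u, hu⟩ : ∃ u, x - μ = u := ⟨_, rfl⟩
  obtain ⟨w, hw⟩ : ∃ w, z - F *ᵥ μ = w := ⟨_, rfl⟩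
  obtain ⟨p, hp⟩ : ∃ p, (Fᵀ * Q⁻¹) *ᵥ w = p := ⟨_, rfl⟩
  obtain ⟨t, ht⟩ : ∃ t, M⁻¹ *ᵥ p = t := ⟨_, rfl⟩
  have hzFx : z - F *ᵥ x = w - F *ᵥ u := by
    rw [← hu, ← hw, Matrix.mulVec_sub]; abel
  have hMt : M *ᵥ t = p := by
    rw [← ht, Matrix.mulVec_mulVec, hMM, Matrix.one_mulVec]
  have swapF : ∀ (a : Fin n → ℝ) (b : Fin m → ℝ), (F *ᵥ a) ⬝ᵥ b = a ⬝ᵥ (Fᵀ *ᵥ b) := by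
    intro a b
    rw [dp_swap Fᵀ a b, Matrix.transpose_transpose]
  have hup : (F *ᵥ u) ⬝ᵥ (Q⁻¹ *ᵥ w) = u ⬝ᵥ p := by
    rw [swapF, Matrix.mulVec_mulVec, hp]
  have hwu : w ⬝ᵥ (Q⁻¹ *ᵥ (F *ᵥ u)) = u ⬝ᵥ p := by
    rw [dp_swap, hQisymm, dotProduct_comm, hup]
  have hff : (F *ᵥ u) ⬝ᵥ (Q⁻¹ *ᵥ (F *ᵥ u)) = u ⬝ᵥ (M *ᵥ u) - u ⬝ᵥ (Sig⁻¹ *ᵥ u) := by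
    rw [swapF, Matrix.mulVec_mulVec, Matrix.mulVec_mulVec, hFQF', Matrix.sub_mulVec,
      dotProduct_sub]
  have huMt : u ⬝ᵥ (M *ᵥ t) = u ⬝ᵥ p := by rw [hMt]
  have htMu : t ⬝ᵥ (M *ᵥ u) = u ⬝ᵥ p := by
    rw [dp_swap, hMsymm, hMt, dotProduct_comm]
  have htMt : t ⬝ᵥ (M *ᵥ t) = p ⬝ᵥ t := by rw [hMt, dotProduct_comm]
  have hwS : w ⬝ᵥ (S⁻¹ *ᵥ w) = w ⬝ᵥ (Q⁻¹ *ᵥ w) - p ⬝ᵥ t := by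
    rw [hWood, Matrix.sub_mulVec, dotProduct_sub]
    congr 1
    rw [show Q⁻¹ * F * M⁻¹ * (Fᵀ * Q⁻¹) = Q⁻¹ * (F * (M⁻¹ * (Fᵀ * Q⁻¹))) by
        simp only [Matrix.mul_assoc],
      ← Matrix.mulVec_mulVec, ← Matrix.mulVec_mulVec, ← Matrix.mulVec_mulVec, hp, ht,
      dp_swap, hQisymm, dotProduct_comm, swapF, Matrix.mulVec_mulVec, hp,
      dotProduct_comm]
  have hmean : x - M⁻¹ *ᵥ (Sig⁻¹ *ᵥ μ + Fᵀ *ᵥ (Q⁻¹ *ᵥ z)) = u - t := by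
    have hz : z = w + F *ᵥ μ := by rw [← hw]; abel
    have key : Sig⁻¹ *ᵥ μ + Fᵀ *ᵥ (Q⁻¹ *ᵥ z) = M *ᵥ μ + p := by
      rw [hz, Matrix.mulVec_add, Matrix.mulVec_add, Matrix.mulVec_mulVec,
        Matrix.mulVec_mulVec, Matrix.mulVec_mulVec, hp, ← hMdef, Matrix.add_mulVec]
      abel
    rw [key, Matrix.mulVec_add, Matrix.mulVec_mulVec, hMM', Matrix.one_mulVec, ht, ← hu]
    abel
  have hquad : (z - F *ᵥ x) ⬝ᵥ (Q⁻¹ *ᵥ (z - F *ᵥ x)) + (x - μ) ⬝ᵥ (Sig⁻¹ *ᵥ (x - μ))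
      = (z - F *ᵥ μ) ⬝ᵥ (S⁻¹ *ᵥ (z - F *ᵥ μ))
        + (x - M⁻¹ *ᵥ (Sig⁻¹ *ᵥ μ + Fᵀ *ᵥ (Q⁻¹ *ᵥ z))) ⬝ᵥ
            (M *ᵥ (x - M⁻¹ *ᵥ (Sig⁻¹ *ᵥ μ + Fᵀ *ᵥ (Q⁻¹ *ᵥ z)))) := by
    rw [hzFx, hmean, hu, hw]
    simp only [Matrix.mulVec_sub, dotProduct_sub, sub_dotProduct]
    rw [hup, hwu, hff, huMt, htMu, htMt, hwS]
    ring
  -- assemble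
  have hMinvinv : M⁻¹⁻¹ = M := Matrix.nonsing_inv_nonsing_inv M hM.det_pos.ne'.isUnit
  simp only [gauss, hMdef, hSdef, hMinvinv]
  have hexp : Real.exp (-((z - F *ᵥ x) ⬝ᵥ (Q⁻¹ *ᵥ (z - F *ᵥ x))) / 2) *
      Real.exp (-((x - μ) ⬝ᵥ (Sig⁻¹ *ᵥ (x - μ))) / 2) =
      Real.exp (-((z - F *ᵥ μ) ⬝ᵥ (S⁻¹ *ᵥ (z - F *ᵥ μ))) / 2) *
      Real.exp (-((x - M⁻¹ *ᵥ (Sig⁻¹ *ᵥ μ + Fᵀ *ᵥ (Q⁻¹ *ᵥ z))) ⬝ᵥ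
          (M *ᵥ (x - M⁻¹ *ᵥ (Sig⁻¹ *ᵥ μ + Fᵀ *ᵥ (Q⁻¹ *ᵥ z))))) / 2) := by
    rw [← Real.exp_add, ← Real.exp_add]
    congr 1
    linarith [hquad]
  set a := (2 * Real.pi) ^ (-(m:ℝ)/2) with ha
  set b := (2 * Real.pi) ^ (-(n:ℝ)/2) with hb
  set dQ := Q.det ^ (-(1:ℝ)/2) with hdq
  set dSg := Sig.det ^ (-(1:ℝ)/2) with hdsg
  set dS := S.det ^ (-(1:ℝ)/2) with hds
  set dT := (M⁻¹).det ^ (-(1:ℝ)/2) with hdt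
  set e1 := Real.exp (-((z - F *ᵥ x) ⬝ᵥ (Q⁻¹ *ᵥ (z - F *ᵥ x))) / 2) with he1
  set e2 := Real.exp (-((x - μ) ⬝ᵥ (Sig⁻¹ *ᵥ (x - μ))) / 2) with he2
  set e3 := Real.exp (-((z - F *ᵥ μ) ⬝ᵥ (S⁻¹ *ᵥ (z - F *ᵥ μ))) / 2) with he3
  set e4 := Real.exp (-((x - M⁻¹ *ᵥ (Sig⁻¹ *ᵥ μ + Fᵀ *ᵥ (Q⁻¹ *ᵥ z))) ⬝ᵥ
      (M *ᵥ (x - M⁻¹ *ᵥ (Sig⁻¹ *ᵥ μ + Fᵀ *ᵥ (Q⁻¹ *ᵥ z))))) / 2) with he4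
  linear_combination (a * b * e3 * e4) * hdets + (a * b * dQ * dSg) * hexp
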